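/- Let d be a positive integer and let w, x ∈ ℂ^d. Let F be the d×d discrete Fourier transform matrix with entries F_{j,k} = e^{−2πi(j−1)(k−1)/d}, write û := Fu, let ũ denote the reflection ũ(n) := u(((1−n) mod d)+1), and define the mask m := (1/d)·conj(reflection of ŵ) ∈ ℂ^d, i.e., m(n) = (1/d)·conj(ŵ(((1−n) mod d)+1)). Then for every ℓ ∈ ℤ, |⟨S_ℓ m, x̂⟩| = |(F(Diag(w)x))(((−ℓ) mod d)+1)|, where Diag(w)x denotes the entrywise (Hadamard) product w ∘ x. -/

import Mathlib

open scoped BigOperators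

noncomputable section

/-- Map an integer to `Fin d` by reduction mod `d` (requires `0 < d`). -/
def intToFin (d : ℕ) (hd : 0 < d) (z : ℤ) : Fin d :=
  ⟨(z % (d : ℤ)).toNat, by
    have h1 : 0 ≤ z % (d : ℤ) := Int.emod_nonneg z (by exact_mod_cast hd.ne')
    have h2 : z % (d : ℤ) < (d : ℤ) := Int.emod_lt_of_pos z (by exact_mod_cast hd)
    omega⟩

/-- Circular shift: `(S_ℓ x)(n) = x(((n + ℓ - 1) mod d) + 1)` in 1-based indexing. -/
def shift {d : ℕ} (ℓ : ℤ) (x : Fin d → ℂ) : Fin d → ℂ :=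
  fun i => x (intToFin d i.pos ((i : ℤ) + ℓ))

/-- `⟨u,v⟩ = ∑ u(n) conj(v(n))`. -/
def innerC {d : ℕ} (u v : Fin d → ℂ) : ℂ := ∑ n, u n * (starRingEnd ℂ) (v n)

/-- `x ∼ x'` iff `x = e^{iθ} x'` for some real `θ`. -/
def phaseEquiv {d : ℕ} (x x' : Fin d → ℂ) : Prop :=
  ∃ θ : ℝ, x = fun n => Complex.exp (θ * Complex.I) * x' n

/-- Euclidean norm on `ℂ^d`. -/
def norm2 {d : ℕ} (x : Fin d → ℂ) : ℝ := Real.sqrt (∑ n, ‖x n‖ ^ 2)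

/-- `D₂(x,x') = min_θ ‖x - e^{iθ} x'‖₂`. -/
def D2 {d : ℕ} (x x' : Fin d → ℂ) : ℝ :=
  ⨅ θ : ℝ, norm2 (fun n => x n - Complex.exp (θ * Complex.I) * x' n)

/-- `C_{p,q} = {x : p ≤ |x(n)| ≤ q for all n}`. -/
def Cpq (d : ℕ) (p q : ℝ) : Set (Fin d → ℂ) :=
  {x | ∀ n, p ≤ ‖x n‖ ∧ ‖x n‖ ≤ q}

/-- `‖m‖_∞ = max_k ‖m_k‖_∞`. -/
def maskSup {d K : ℕ} (m : Fin K → Fin d → ℂ) : ℝ :=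
  ⨆ k, ⨆ n, ‖m k n‖

/-- The measurement map `Z(x)_{k,ℓ} = |⟨S_{ℓa} m_k, x⟩|`, `1 ≤ k ≤ K`, `1 ≤ ℓ ≤ L`. -/
def Zmap {d K : ℕ} (L : ℕ) (m : Fin K → Fin d → ℂ) (a : ℕ) (x : Fin d → ℂ) :
    EuclideanSpace ℝ (Fin K × Fin L) :=
  WithLp.toLp 2 (fun kl => ‖innerC (shift ((((kl.2 : ℕ) + 1) * a : ℕ) : ℤ) (m kl.1)) x‖)

/-- The measurement map `Y(x)_{k,ℓ} = |⟨S_{ℓa} m_k, x⟩|²`. -/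
def Ymap {d K : ℕ} (L : ℕ) (m : Fin K → Fin d → ℂ) (a : ℕ) (x : Fin d → ℂ) :
    EuclideanSpace ℝ (Fin K × Fin L) :=
  WithLp.toLp 2 (fun kl => ‖innerC (shift ((((kl.2 : ℕ) + 1) * a : ℕ) : ℤ) (m kl.1)) x‖ ^ 2)

/-- The vectors `x^{±}` (sign `ε = ±1`): `q` on positions `1,…,d/2-δ`, `p` on
`d/2-δ+1,…,d/2`, `±q` on `d/2+1,…,d-δ`, and `p` on `d-δ+1,…,d`. -/
def xpm (d δ : ℕ) (p q ε : ℝ) : Fin d → ℂ :=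
  fun i => if (i : ℕ) < d / 2 - δ then (q : ℂ)
    else if (i : ℕ) < d / 2 then (p : ℂ)
    else if (i : ℕ) < d - δ then ((ε * q : ℝ) : ℂ)
    else (p : ℂ)

/-- The difference of outer products `x x^* - x' x'^*`. -/
def outerDiff {d : ℕ} (x x' : Fin d → ℂ) : Matrix (Fin d) (Fin d) ℂ :=
  Matrix.of fun i j => x i * star (x j) - x' i * star (x' j)

lemma outerDiff_isHermitian {d : ℕ} (x x' : Fin d → ℂ) :
    (outerDiff x x').IsHermitian := by
  unfold Matrix.IsHermitian
  ext i j
  simp [outerDiff, Matrix.conjTranspose_apply, star_sub, star_mul, star_star, mul_comm]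

/-- `d₁(x,x') = ‖x x^* - x' x'^*‖₁`, the sum of the singular values (for a Hermitian
matrix, the sum of the absolute values of its eigenvalues). -/
def d1 {d : ℕ} (x x' : Fin d → ℂ) : ℝ :=
  ∑ i, |(outerDiff_isHermitian x x').eigenvalues i|

/-- The discrete Fourier transform: `û(j) = ∑_k e^{-2πi(j-1)(k-1)/d} u(k)`. -/
def dft {d : ℕ} (u : Fin d → ℂ) : Fin d → ℂ :=
  fun j => ∑ k : Fin d, Complex.exp (-(2 * (Real.pi : ℂ) * Complex.I * ((j : ℕ) : ℂ) * ((k : ℕ) : ℂ))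
    / (d : ℂ)) * u k

def ee (d : ℕ) (m : ℤ) : ℂ :=
  Complex.exp (-(2 * (Real.pi : ℂ) * Complex.I * (m : ℂ)) / (d : ℂ))

lemma ee_add (d : ℕ) (m n : ℤ) : ee d (m + n) = ee d m * ee d n := by
  rw [ee, ee, ee, ← Complex.exp_add]; congr 1; push_cast; ring

lemma ee_zero (d : ℕ) : ee d 0 = 1 := by simp [ee]

lemma ee_mul_d (d : ℕ) (hd : 0 < d) (q : ℤ) : ee d ((d : ℤ) * q) = 1 := by
  have hdc : (d : ℂ) ≠ 0 := Nat.cast_ne_zero.mpr hd.ne'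
  rw [ee]
  have : -(2 * (Real.pi : ℂ) * Complex.I * (((d : ℤ) * q : ℤ) : ℂ)) / (d : ℂ)
      = ((-q : ℤ) : ℂ) * (2 * (Real.pi : ℂ) * Complex.I) := by
    push_cast; field_simp
  rw [this, Complex.exp_int_mul_two_pi_mul_I]

lemma ee_mod (d : ℕ) (hd : 0 < d) (m : ℤ) : ee d (m % (d : ℤ)) = ee d m := by
  conv_rhs => rw [← Int.mul_ediv_add_emod m (d : ℤ)]
  rw [ee_add, ee_mul_d d hd, one_mul]

lemma ee_congr (d : ℕ) (hd : 0 < d) {m n : ℤ} (h : m % (d : ℤ) = n % (d : ℤ)) :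
    ee d m = ee d n := by
  rw [← ee_mod d hd m, h, ee_mod d hd]

lemma ee_pow (d : ℕ) (n : ℕ) (c : ℤ) : ee d ((n : ℤ) * c) = ee d c ^ n := by
  induction n with
  | zero => simpa using ee_zero d
  | succ k ih =>
    have : ((k + 1 : ℕ) : ℤ) * c = (k : ℤ) * c + c := by push_cast; ring
    rw [this, ee_add, ih, pow_succ]

lemma ee_ne_one (d : ℕ) (hd : 0 < d) {c : ℤ} (hc : ¬ ((d : ℤ) ∣ c)) : ee d c ≠ 1 := by
  intro h
  rw [ee, Complex.exp_eq_one_iff] at h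
  obtain ⟨n, hn⟩ := h
  have hdc : (d : ℂ) ≠ 0 := Nat.cast_ne_zero.mpr hd.ne'
  have hI : (Complex.I : ℂ) ≠ 0 := Complex.I_ne_zero
  have hpi : (Real.pi : ℂ) ≠ 0 := by exact_mod_cast Real.pi_ne_zero
  have h2 : (2 : ℂ) * Real.pi * Complex.I ≠ 0 := by
    simp [hpi, hI]
  have : (c : ℂ) = ((-n * d : ℤ) : ℂ) := by
    push_cast
    field_simp at hn
    have h3 : (2 * (Real.pi : ℂ) * Complex.I) * ((c : ℂ) + (n : ℂ) * (d : ℂ)) = 0 := by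
      linear_combination (-(2 * (Real.pi : ℂ) * Complex.I)) * hn
    rcases mul_eq_zero.mp h3 with h4 | h4
    · exact absurd h4 h2
    · linear_combination h4
  have hc' : c = -n * d := by exact_mod_cast this
  exact hc ⟨-n, by rw [hc']; ring⟩

lemma char_sum (d : ℕ) (hd : 0 < d) (c : ℤ) :
    ∑ n : Fin d, ee d ((n : ℤ) * c) = if (d : ℤ) ∣ c then (d : ℂ) else 0 := by
  have hterm : ∀ n : Fin d, ee d ((n : ℤ) * c) = ee d c ^ (n : ℕ) := fun n => ee_pow d n c
  by_cases h : (d : ℤ) ∣ c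
  · obtain ⟨q, rfl⟩ := h
    rw [if_pos (Dvd.intro q rfl)]
    simp only [hterm, ee_mul_d d hd, one_pow]
    simp
  · rw [if_neg h]
    have hr : ee d c ≠ 1 := ee_ne_one d hd h
    calc ∑ n : Fin d, ee d ((n : ℤ) * c) = ∑ n ∈ Finset.range d, ee d c ^ n := by
          simp only [hterm]
          exact Fin.sum_univ_eq_sum_range (fun n => ee d c ^ n) d
      _ = (ee d c ^ d - 1) / (ee d c - 1) := geom_sum_eq hr d
      _ = 0 := by
          have : ee d c ^ d = 1 := by
            rw [← ee_pow, ee_mul_d d hd]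
          rw [this]; simp

def dftZ (d : ℕ) (u : Fin d → ℂ) (z : ℤ) : ℂ :=
  ∑ k : Fin d, ee d (z * ((k : ℕ) : ℤ)) * u k

lemma intToFin_coe (d : ℕ) (hd : 0 < d) (z : ℤ) :
    (((intToFin d hd z : Fin d) : ℕ) : ℤ) = z % (d : ℤ) := by
  have h1 : 0 ≤ z % (d : ℤ) := Int.emod_nonneg z (by exact_mod_cast hd.ne')
  simp [intToFin, Int.toNat_of_nonneg h1]

lemma dft_eq (d : ℕ) (u : Fin d → ℂ) (j : Fin d) :
    dft u j = ∑ k : Fin d, ee d (((j : ℕ) : ℤ) * ((k : ℕ) : ℤ)) * u k := by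
  refine Finset.sum_congr rfl fun k _ => ?_
  unfold ee
  congr 2
  push_cast
  ring

lemma dftZ_congr (d : ℕ) (hd : 0 < d) {z₁ z₂ : ℤ} (h : z₁ % (d : ℤ) = z₂ % (d : ℤ))
    (u : Fin d → ℂ) : dftZ d u z₁ = dftZ d u z₂ := by
  refine Finset.sum_congr rfl fun k _ => ?_
  exact congrArg (· * u k) (ee_congr d hd (by rw [Int.mul_emod, h, ← Int.mul_emod]))

lemma dft_intToFin (d : ℕ) (hd : 0 < d) (u : Fin d → ℂ) (z : ℤ) :
    dft u (intToFin d hd z) = dftZ d u z := by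
  rw [dft_eq]
  have h1 : (∑ k : Fin d, ee d ((((intToFin d hd z : Fin d) : ℕ) : ℤ) * ((k : ℕ) : ℤ)) * u k)
      = dftZ d u (((intToFin d hd z : Fin d) : ℕ) : ℤ) := rfl
  rw [h1, intToFin_coe]
  exact dftZ_congr d hd (Int.emod_emod_of_dvd z dvd_rfl) u

lemma fin_dvd_iff (d : ℕ) (a b : Fin d) :
    (d : ℤ) ∣ ((b : ℕ) : ℤ) - ((a : ℕ) : ℤ) ↔ b = a := by
  constructor
  · intro h
    have hb : ((b : ℕ) : ℤ) < d := by exact_mod_cast b.isLt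
    have ha : ((a : ℕ) : ℤ) < d := by exact_mod_cast a.isLt
    have h0 : ((b : ℕ) : ℤ) - ((a : ℕ) : ℤ) = 0 := by
      refine Int.eq_zero_of_abs_lt_dvd h ?_
      rw [abs_lt]
      constructor <;> omega
    have : (b : ℕ) = (a : ℕ) := by omega
    exact Fin.ext this
  · rintro rfl; simp

lemma key_sum (d : ℕ) (hd : 0 < d) (w x : Fin d → ℂ) (ℓ : ℤ) :
    ∑ n : Fin d, dftZ d w (-(((n : ℕ) : ℤ) + ℓ)) * dft x n
      = (d : ℂ) * dftZ d (fun a => w a * x a) (-ℓ) := by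
  calc ∑ n : Fin d, dftZ d w (-(((n : ℕ) : ℤ) + ℓ)) * dft x n
      = ∑ n : Fin d, ∑ a : Fin d, ∑ b : Fin d,
          (w a * x b) * (ee d (-ℓ * ((a : ℕ) : ℤ))
            * ee d (((n : ℕ) : ℤ) * (((b : ℕ) : ℤ) - ((a : ℕ) : ℤ)))) := by
        refine Finset.sum_congr rfl fun n _ => ?_
        rw [dftZ, dft_eq, Finset.sum_mul_sum]
        refine Finset.sum_congr rfl fun a _ => Finset.sum_congr rfl fun b _ => ?_
        have h1 : ee d (-(((n : ℕ) : ℤ) + ℓ) * ((a : ℕ) : ℤ)) * ee d (((n : ℕ) : ℤ) * ((b : ℕ) : ℤ))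
            = ee d (-ℓ * ((a : ℕ) : ℤ)) * ee d (((n : ℕ) : ℤ) * (((b : ℕ) : ℤ) - ((a : ℕ) : ℤ))) := by
          rw [← ee_add, ← ee_add]
          congr 1
          ring
        calc (ee d (-(((n : ℕ) : ℤ) + ℓ) * ((a : ℕ) : ℤ)) * w a)
              * (ee d (((n : ℕ) : ℤ) * ((b : ℕ) : ℤ)) * x b)
            = (w a * x b) * (ee d (-(((n : ℕ) : ℤ) + ℓ) * ((a : ℕ) : ℤ))
                * ee d (((n : ℕ) : ℤ) * ((b : ℕ) : ℤ))) := by ring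
          _ = _ := by rw [h1]
    _ = ∑ a : Fin d, ∑ b : Fin d, (w a * x b) * ee d (-ℓ * ((a : ℕ) : ℤ))
          * (∑ n : Fin d, ee d (((n : ℕ) : ℤ) * (((b : ℕ) : ℤ) - ((a : ℕ) : ℤ)))) := by
        rw [Finset.sum_comm]
        refine Finset.sum_congr rfl fun a _ => ?_
        rw [Finset.sum_comm]
        refine Finset.sum_congr rfl fun b _ => ?_
        rw [Finset.mul_sum]
        exact Finset.sum_congr rfl fun n _ => by ring
    _ = ∑ a : Fin d, (w a * x a) * ee d (-ℓ * ((a : ℕ) : ℤ)) * (d : ℂ) := by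
        refine Finset.sum_congr rfl fun a _ => ?_
        rw [show (∑ b : Fin d, (w a * x b) * ee d (-ℓ * ((a : ℕ) : ℤ))
            * (∑ n : Fin d, ee d (((n : ℕ) : ℤ) * (((b : ℕ) : ℤ) - ((a : ℕ) : ℤ)))))
          = ∑ b : Fin d, if b = a then (w a * x b) * ee d (-ℓ * ((a : ℕ) : ℤ)) * (d : ℂ) else 0
          from Finset.sum_congr rfl fun b _ => by
            rw [char_sum d hd]
            by_cases hba : b = a
            · rw [if_pos ((fin_dvd_iff d a b).mpr hba), if_pos hba]
            · rw [if_neg (fun hdvd => hba ((fin_dvd_iff d a b).mp hdvd)), if_neg hba, mul_zero]]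
        rw [Finset.sum_ite_eq' Finset.univ a
          (fun b => (w a * x b) * ee d (-ℓ * ((a : ℕ) : ℤ)) * (d : ℂ))]
        simp
    _ = (d : ℂ) * dftZ d (fun a => w a * x a) (-ℓ) := by
        rw [dftZ, Finset.mul_sum]
        exact Finset.sum_congr rfl fun a _ => by ring

/-- With the mask `m(n) = (1/d) conj(ŵ(((1-n) mod d)+1))`, for every
`ℓ ∈ ℤ`, `|⟨S_ℓ m, x̂⟩| = |(F(Diag(w)x))(((-ℓ) mod d)+1)|`. -/
theorem masked_fourier (d : ℕ) (hd : 0 < d) (w x : Fin d → ℂ) :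
    ∀ ℓ : ℤ,
      ‖innerC
          (shift ℓ (fun i => (1 / (d : ℂ)) * (starRingEnd ℂ) (dft w (intToFin d hd (-(i : ℤ))))))
          (dft x)‖
        = ‖dft (fun n => w n * x n) (intToFin d hd (-ℓ))‖ := by
  intro ℓ
  have hdr : (d : ℝ) ≠ 0 := Nat.cast_ne_zero.mpr hd.ne'
  have hneg : ∀ z : ℤ, (-(z % (d : ℤ))) % (d : ℤ) = (-z) % (d : ℤ) := fun z =>
    Int.ModEq.neg (Int.emod_emod_of_dvd z dvd_rfl)
  have hL : innerC
      (shift ℓ (fun i => (1 / (d : ℂ)) * (starRingEnd ℂ) (dft w (intToFin d hd (-(i : ℤ))))))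
      (dft x)
      = (1 / (d : ℂ)) * (starRingEnd ℂ)
          (∑ n : Fin d, dftZ d w (-(((n : ℕ) : ℤ) + ℓ)) * dft x n) := by
    unfold innerC shift
    rw [map_sum, Finset.mul_sum]
    refine Finset.sum_congr rfl fun n _ => ?_
    have h2 : dft w (intToFin d hd (-((intToFin d n.pos (((n : ℕ) : ℤ) + ℓ) : ℕ) : ℤ)))
        = dftZ d w (-(((n : ℕ) : ℤ) + ℓ)) := by
      rw [dft_intToFin, intToFin_coe]
      exact dftZ_congr d hd (hneg _) w
    dsimp only
    rw [h2, map_mul]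
    ring
  rw [hL, key_sum d hd w x ℓ, dft_intToFin d hd (fun n => w n * x n) (-ℓ)]
  rw [map_mul]
  simp only [Complex.norm_conj, norm_mul, Complex.norm_natCast, norm_div, norm_one]
  field_simp
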